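/- Suppose 1, θ₁, …, θₙ are linearly independent over ℚ, ω̂ < ∞, and λ̂ < 1. If any two of the four quantities G_lin(ω̂), (ω̂λ̂)^{1/(n−1)}, (1 − ω̂^{−1})/(1 − λ̂), G_sim(λ̂) are equal, then all four of them are equal. -/

import Mathlib

open scoped ENNReal


/-- Solvability of the simultaneous approximation system
`max_{1≤i≤n} |x₀θᵢ - xᵢ| ≤ t^{-γ}`, `0 < |x₀| ≤ t` in integers. -/
def SimSolvable (n : ℕ) (θ : Fin n → ℝ) (γ t : ℝ) : Prop :=
  ∃ x : Fin (n+1) → ℤ, x 0 ≠ 0 ∧ (|x 0| : ℝ) ≤ t ∧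
    ∀ i : Fin n, |(x 0 : ℝ) * θ i - (x i.succ : ℝ)| ≤ t ^ (-γ)

/-- Solvability of the linear form system
`|x₀ + θ₁x₁ + … + θₙxₙ| ≤ t^{-γ}`, `0 < max_{1≤i≤n} |xᵢ| ≤ t` in integers. -/
def LinSolvable (n : ℕ) (θ : Fin n → ℝ) (γ t : ℝ) : Prop :=
  ∃ x : Fin (n+1) → ℤ, (∃ i : Fin n, x i.succ ≠ 0) ∧ (∀ i : Fin n, (|x i.succ| : ℝ) ≤ t) ∧
    |(x 0 : ℝ) + ∑ i : Fin n, θ i * (x i.succ : ℝ)| ≤ t ^ (-γ)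

/-- The regular simultaneous Diophantine exponent `λ(θ) ∈ [0,∞]`. -/
noncomputable def lambdaExp (n : ℕ) (θ : Fin n → ℝ) : ℝ≥0∞ :=
  sSup {e : ℝ≥0∞ | ∃ γ : ℝ, 0 < γ ∧ e = ENNReal.ofReal γ ∧
    ∀ T : ℝ, ∃ t : ℝ, T < t ∧ SimSolvable n θ γ t}

/-- The uniform simultaneous Diophantine exponent `λ̂(θ) ∈ [0,∞]`. -/
noncomputable def lambdaHatExp (n : ℕ) (θ : Fin n → ℝ) : ℝ≥0∞ :=
  sSup {e : ℝ≥0∞ | ∃ γ : ℝ, 0 < γ ∧ e = ENNReal.ofReal γ ∧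
    ∃ T : ℝ, ∀ t : ℝ, T < t → SimSolvable n θ γ t}

/-- The regular linear form Diophantine exponent `ω(θ) ∈ [0,∞]`. -/
noncomputable def omegaExp (n : ℕ) (θ : Fin n → ℝ) : ℝ≥0∞ :=
  sSup {e : ℝ≥0∞ | ∃ γ : ℝ, 0 < γ ∧ e = ENNReal.ofReal γ ∧
    ∀ T : ℝ, ∃ t : ℝ, T < t ∧ LinSolvable n θ γ t}

/-- The uniform linear form Diophantine exponent `ω̂(θ) ∈ [0,∞]`. -/
noncomputable def omegaHatExp (n : ℕ) (θ : Fin n → ℝ) : ℝ≥0∞ :=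
  sSup {e : ℝ≥0∞ | ∃ γ : ℝ, 0 < γ ∧ e = ENNReal.ofReal γ ∧
    ∃ T : ℝ, ∀ t : ℝ, T < t → LinSolvable n θ γ t}
/-- `G_lin(w)`: the largest real root of `f(x) = w⁻¹xⁿ - x + (1 - w⁻¹)`
(the root set always contains `1`, so the supremum is the largest root). -/
noncomputable def Glin (n : ℕ) (w : ℝ) : ℝ :=
  sSup {x : ℝ | w⁻¹ * x ^ n - x + (1 - w⁻¹) = 0}

/-- `G_sim(l)`: the largest real root of `g(x) = (1-l)xⁿ - x^{n-1} + l`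
(the root set always contains `1`, so the supremum is the largest root). -/
noncomputable def Gsim (n : ℕ) (l : ℝ) : ℝ :=
  sSup {x : ℝ | (1 - l) * x ^ n - x ^ (n - 1) + l = 0}

noncomputable def pp (n : ℕ) (x : ℝ) : ℝ := ∑ k ∈ Finset.range n, x ^ k

lemma pp_one (n : ℕ) : pp n 1 = n := by simp [pp]

lemma pp_geom (n : ℕ) (x : ℝ) : (x - 1) * pp n x = x ^ n - 1 := by
  rw [pp, mul_comm]; exact geom_sum_mul x n

lemma pp_cont (n : ℕ) : Continuous (pp n) := by
  unfold pp; exact continuous_finset_sum _ (fun k _ => continuous_pow k)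

lemma pp_mono {n : ℕ} (hn : 2 ≤ n) {x y : ℝ} (hx : 0 ≤ x) (hxy : x < y) :
    pp n x < pp n y := by
  unfold pp
  apply Finset.sum_lt_sum
  · intro k _
    exact pow_le_pow_left₀ hx hxy.le k
  · exact ⟨1, Finset.mem_range.2 (by omega), by simpa using hxy⟩

lemma pp_ge_one {n : ℕ} (hn : 1 ≤ n) {x : ℝ} (hx : 0 ≤ x) : 1 ≤ pp n x := by
  unfold pp
  calc (1:ℝ) = ∑ k ∈ Finset.range 1, x ^ k := by simp
  _ ≤ _ := Finset.sum_le_sum_of_subset_of_nonneg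
      (Finset.range_subset_range.2 hn) (fun k _ _ => pow_nonneg hx k)

lemma pp_cross {n : ℕ} (hn : 2 ≤ n) {x y : ℝ} (hx : 1 ≤ x) (hxy : x < y) :
    x ^ (n-1) * pp n y < y ^ (n-1) * pp n x := by
  have hx0 : (0:ℝ) ≤ x := by linarith
  unfold pp
  rw [Finset.mul_sum, Finset.mul_sum]
  apply Finset.sum_lt_sum
  · intro k hk
    have hk' : k ≤ n - 1 := by have := Finset.mem_range.1 hk; omega
    have h1 : x ^ (n-1) = x ^ (n-1-k) * x ^ k := by
      rw [← pow_add]; congr 1; omega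
    have h2 : y ^ (n-1) = y ^ (n-1-k) * y ^ k := by
      rw [← pow_add]; congr 1; omega
    rw [h1, h2]
    have : x ^ (n-1-k) ≤ y ^ (n-1-k) := pow_le_pow_left₀ hx0 hxy.le _
    calc x ^ (n-1-k) * x ^ k * y ^ k ≤ y ^ (n-1-k) * x ^ k * y ^ k := by
          apply mul_le_mul_of_nonneg_right _ (pow_nonneg (by linarith) k)
          exact mul_le_mul_of_nonneg_right this (pow_nonneg hx0 k)
      _ = y ^ (n-1-k) * y ^ k * x ^ k := by ring
  · refine ⟨0, Finset.mem_range.2 (by omega), ?_⟩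
    simpa using pow_lt_pow_left₀ hxy hx0 (by omega : n - 1 ≠ 0)

-- root set rewriting
lemma lin_root_iff {n : ℕ} {w x : ℝ} (hw : w ≠ 0) :
    w⁻¹ * x ^ n - x + (1 - w⁻¹) = 0 ↔ (x - 1) * (pp n x - w) = 0 := by
  have h := pp_geom n x
  constructor
  · intro h0
    have : x ^ n - w * x + (w - 1) = 0 := by
      have := congrArg (fun y => w * y) h0
      field_simp at this
      linarith [this]
    nlinarith [h, this]
  · intro h0
    have hxn : x ^ n = w * x - w + 1 := by nlinarith [h, h0]
    field_simp
    nlinarith [hxn]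

lemma sim_root_iff {n : ℕ} (hn : 2 ≤ n) {l x : ℝ} :
    (1 - l) * x ^ n - x ^ (n - 1) + l = 0 ↔ (x - 1) * (x ^ (n-1) - l * pp n x) = 0 := by
  have h := pp_geom n x
  have hxn : x ^ n = x * x ^ (n-1) := by
    rw [← pow_succ']; congr 1; omega
  have key : (x - 1) * (x ^ (n-1) - l * pp n x) = (1 - l) * x ^ n - x ^ (n-1) + l := by
    calc (x - 1) * (x ^ (n-1) - l * pp n x)
        = (x * x ^ (n-1) - x ^ (n-1)) - l * ((x - 1) * pp n x) := by ring
      _ = (x ^ n - x ^ (n-1)) - l * (x ^ n - 1) := by rw [h, ← hxn]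
      _ = (1 - l) * x ^ n - x ^ (n-1) + l := by ring
  constructor <;> intro h0 <;> linarith [key]

lemma pp_split {n : ℕ} (hn : 2 ≤ n) (x : ℝ) : pp n x = pp (n-1) x + x ^ (n-1) := by
  obtain ⟨m, rfl⟩ : ∃ m, n = m + 1 := ⟨n-1, by omega⟩
  simp [pp, Finset.sum_range_succ]

lemma pp_split' {n : ℕ} (hn : 2 ≤ n) (x : ℝ) : pp n x = 1 + x * pp (n-1) x := by
  obtain ⟨m, rfl⟩ : ∃ m, n = m + 1 := ⟨n-1, by omega⟩
  simp only [pp, Finset.sum_range_succ', Nat.add_sub_cancel, pow_zero]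
  simp_rw [pow_succ']
  rw [← Finset.mul_sum]
  ring

lemma glin_spec {n : ℕ} (hn : 2 ≤ n) {w : ℝ} (hw : (n:ℝ) ≤ w) :
    ∃ a : ℝ, 1 ≤ a ∧ pp n a = w ∧ Glin n w = a := by
  have hn0 : (0:ℝ) < n := by positivity
  have hw1 : (1:ℝ) < w := by
    have : (2:ℝ) ≤ n := by exact_mod_cast hn
    linarith
  have h1w : (1:ℝ) ≤ w := hw1.le
  have hppw : w ≤ pp n w := by
    have : (1:ℝ) + w ≤ pp n w := by
      unfold pp
      calc (1:ℝ) + w = ∑ k ∈ Finset.range 2, w ^ k := by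
            simp [Finset.sum_range_succ]
      _ ≤ _ := Finset.sum_le_sum_of_subset_of_nonneg
          (Finset.range_subset_range.2 hn) (fun k _ _ => pow_nonneg (by linarith) k)
    linarith
  have hiv := intermediate_value_Icc h1w (pp_cont n).continuousOn
  have hwmem : w ∈ Set.Icc (pp n 1) (pp n w) := by
    rw [pp_one]; exact ⟨hw, hppw⟩
  obtain ⟨a, ha, hpa⟩ := hiv hwmem
  refine ⟨a, ha.1, hpa, ?_⟩
  have hwne : w ≠ 0 := by linarith
  have hgr : IsGreatest {x : ℝ | w⁻¹ * x ^ n - x + (1 - w⁻¹) = 0} a := by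
    constructor
    · show w⁻¹ * a ^ n - a + (1 - w⁻¹) = 0
      rw [lin_root_iff hwne, hpa]; ring
    · intro y hy
      rw [Set.mem_setOf_eq, lin_root_iff hwne] at hy
      rcases mul_eq_zero.1 hy with h | h
      · have : y = 1 := by linarith [sub_eq_zero.1 h]
        linarith [ha.1]
      · have hpy : pp n y = w := by linarith [sub_eq_zero.1 h]
        by_contra hlt
        push_neg at hlt
        have := pp_mono hn (by linarith [ha.1] : (0:ℝ) ≤ a) hlt
        rw [hpa, hpy] at this; linarith
  exact hgr.csSup_eq

lemma glin_eq {n : ℕ} (hn : 2 ≤ n) {w x : ℝ} (hw : (n:ℝ) ≤ w) (hx : 1 ≤ x)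
    (hpx : pp n x = w) : Glin n w = x := by
  obtain ⟨a, ha1, hpa, hga⟩ := glin_spec hn hw
  rcases lt_trichotomy x a with h | h | h
  · have := pp_mono hn (by linarith) h; rw [hpx, hpa] at this; linarith
  · rw [hga, h]
  · have := pp_mono hn (by linarith) h; rw [hpx, hpa] at this; linarith

lemma gsim_spec {n : ℕ} (hn : 2 ≤ n) {l : ℝ} (hl : (n:ℝ)⁻¹ ≤ l) (hl1 : l < 1) :
    ∃ d : ℝ, 1 ≤ d ∧ d ^ (n-1) = l * pp n d ∧ Gsim n l = d := by
  have hn0 : (0:ℝ) < n := by positivity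
  have hl0 : 0 < l := lt_of_lt_of_le (by positivity) hl
  have hln : 1 ≤ l * n := by
    have := mul_le_mul_of_nonneg_right hl hn0.le
    rwa [inv_mul_cancel₀ hn0.ne'] at this
  set M : ℝ := ((n:ℝ)+1)/(1-l) with hM
  have h1l : 0 < 1 - l := by linarith
  have hM1 : 1 ≤ M := by
    rw [hM, le_div_iff₀ h1l]; linarith
  set F : ℝ → ℝ := fun x => x ^ (n-1) - l * pp n x with hF
  have hFcont : Continuous F := by
    exact (continuous_pow (n-1)).sub (continuous_const.mul (pp_cont n))
  have hF1 : F 1 ≤ 0 := by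
    simp only [hF, pp_one, one_pow]; linarith
  have hFM : 0 ≤ F M := by
    have hM0 : (0:ℝ) ≤ M := by linarith
    have hb : pp (n-1) M ≤ ((n:ℝ)-1) * M ^ (n-2) := by
      have : ∀ k ∈ Finset.range (n-1), M ^ k ≤ M ^ (n-2) := by
        intro k hk
        exact pow_le_pow_right₀ hM1 (by have := Finset.mem_range.1 hk; omega)
      calc pp (n-1) M ≤ ∑ _k ∈ Finset.range (n-1), M ^ (n-2) :=
            Finset.sum_le_sum this
        _ = ((n-1 : ℕ):ℝ) * M ^ (n-2) := by
            rw [Finset.sum_const, Finset.card_range, nsmul_eq_mul]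
        _ = ((n:ℝ)-1) * M ^ (n-2) := by
            congr 1
            push_cast [Nat.cast_sub (by omega : 1 ≤ n)]
            ring
    have hMsplit : M ^ (n-1) = M * M ^ (n-2) := by
      rw [← pow_succ']; congr 1; omega
    have hppM : pp n M ≤ M ^ (n-1) + ((n:ℝ)-1) * M ^ (n-2) := by
      rw [pp_split hn]; linarith
    have hMn2 : (0:ℝ) ≤ M ^ (n-2) := pow_nonneg hM0 _
    have key : (1-l) * M = (n:ℝ) + 1 := by
      rw [hM]; field_simp
    have : 0 ≤ ((1-l) * M - l * ((n:ℝ)-1)) * M ^ (n-2) := by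
      apply mul_nonneg _ hMn2
      nlinarith
    simp only [hF]
    nlinarith [mul_le_mul_of_nonneg_left hppM hl0.le]
  obtain ⟨d, hdmem, hFd⟩ := intermediate_value_Icc hM1 hFcont.continuousOn ⟨hF1, hFM⟩
  have hd1 : 1 ≤ d := hdmem.1
  have hdrel : d ^ (n-1) = l * pp n d := by
    have : F d = 0 := hFd
    simp only [hF] at this; linarith
  refine ⟨d, hd1, hdrel, ?_⟩
  have hgr : IsGreatest {x : ℝ | (1 - l) * x ^ n - x ^ (n - 1) + l = 0} d := by
    constructor
    · show (1 - l) * d ^ n - d ^ (n - 1) + l = 0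
      rw [sim_root_iff hn, hdrel]; ring
    · intro y hy
      rw [Set.mem_setOf_eq, sim_root_iff hn] at hy
      rcases mul_eq_zero.1 hy with h | h
      · have : y = 1 := by linarith [sub_eq_zero.1 h]
        linarith
      · have hpy : y ^ (n-1) = l * pp n y := by linarith [sub_eq_zero.1 h]
        by_contra hlt
        push_neg at hlt
        have hc := pp_cross hn hd1 hlt
        rw [hdrel, hpy] at hc
        nlinarith
  exact hgr.csSup_eq

lemma gsim_eq {n : ℕ} (hn : 2 ≤ n) {l x : ℝ} (hl : (n:ℝ)⁻¹ ≤ l) (hl1 : l < 1)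
    (hx : 1 ≤ x) (hrel : x ^ (n-1) = l * pp n x) : Gsim n l = x := by
  obtain ⟨d, hd1, hdrel, hgd⟩ := gsim_spec hn hl hl1
  rcases lt_trichotomy x d with h | h | h
  · have hc := pp_cross hn hx h
    rw [hrel, hdrel] at hc; nlinarith
  · rw [hgd, h]
  · have hc := pp_cross hn hd1 h
    rw [hrel, hdrel] at hc; nlinarith

lemma cast_sub1 {n : ℕ} (hn : 2 ≤ n) : ((n-1:ℕ):ℝ) = (n:ℝ)-1 := by
  push_cast [Nat.cast_sub (by omega : 1 ≤ n)]; ring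

lemma pow_rpow_inv {n : ℕ} (hn : 2 ≤ n) {x : ℝ} (hx : 0 ≤ x) :
    ((x ^ (n-1:ℕ) : ℝ)) ^ (((n:ℝ)-1)⁻¹) = x := by
  have he : ((n:ℝ)-1) ≠ 0 := by
    have : (2:ℝ) ≤ n := by exact_mod_cast hn
    linarith
  rw [← Real.rpow_natCast x (n-1), ← Real.rpow_mul hx, cast_sub1 hn,
    mul_inv_cancel₀ he, Real.rpow_one]

lemma rpow_inv_pow {n : ℕ} (hn : 2 ≤ n) {y : ℝ} (hy : 0 ≤ y) :
    ((y ^ (((n:ℝ)-1)⁻¹) : ℝ)) ^ (n-1:ℕ) = y := by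
  have he : ((n:ℝ)-1) ≠ 0 := by
    have : (2:ℝ) ≤ n := by exact_mod_cast hn
    linarith
  rw [← Real.rpow_natCast _ (n-1), ← Real.rpow_mul hy, cast_sub1 hn,
    inv_mul_cancel₀ he, Real.rpow_one]

lemma main_alg {n : ℕ} (hn : 2 ≤ n) {w l : ℝ} (hw : (n:ℝ) ≤ w)
    (hl : (n:ℝ)⁻¹ ≤ l) (hl1 : l < 1)
    (a b c d : ℝ)
    (ha : a = Glin n w) (hb : b = (w * l) ^ (((n:ℝ)-1)⁻¹))
    (hc : c = (1 - w⁻¹) / (1 - l)) (hd : d = Gsim n l)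
    (htwo : a = b ∨ a = c ∨ a = d ∨ b = c ∨ b = d ∨ c = d) :
    a = b ∧ b = c ∧ c = d := by
  have hn2 : (2:ℝ) ≤ n := by exact_mod_cast hn
  have hn0 : (0:ℝ) < n := by linarith
  have hw1 : (1:ℝ) < w := by linarith
  have hw0 : (0:ℝ) < w := by linarith
  have hl0 : (0:ℝ) < l := lt_of_lt_of_le (by positivity) hl
  have h1l : (0:ℝ) < 1 - l := by linarith
  have hwl1 : (1:ℝ) ≤ w * l := by
    calc (1:ℝ) = (n:ℝ) * (n:ℝ)⁻¹ := by field_simp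
    _ ≤ w * l := by
        apply mul_le_mul hw hl (by positivity) (by linarith)
  have hwl0 : (0:ℝ) ≤ w * l := by linarith
  obtain ⟨A, hA1, hpA, hgA⟩ := glin_spec hn hw
  obtain ⟨D, hD1, hpD, hgD⟩ := gsim_spec hn hl hl1
  have haA : a = A := by rw [ha, hgA]
  have hdD : d = D := by rw [hd, hgD]
  have hA0 : (0:ℝ) < A := by linarith
  have hgeomA : (A - 1) * pp n A = A * A ^ (n-1) - 1 := by
    rw [pp_geom]
    congr 1
    rw [← pow_succ']
    congr 1
    omega
  have hgeomD : (D - 1) * pp n D = D * D ^ (n-1) - 1 := by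
    rw [pp_geom]
    congr 1
    rw [← pow_succ']
    congr 1
    omega
  have hbpow : b ^ (n-1:ℕ) = w * l := by rw [hb]; exact rpow_inv_pow hn hwl0
  -- w = n implies A = 1
  have hA_of_wn : w = (n:ℝ) → A = 1 := by
    intro hwn
    rcases lt_trichotomy A 1 with h | h | h
    · have := pp_mono hn (by linarith) h
      rw [hpA, pp_one, hwn] at this; linarith
    · exact h
    · have := pp_mono hn (by norm_num) h
      rw [hpA, pp_one, hwn] at this; linarith
  -- the central condition
  have hC : w * l = A ^ (n-1:ℕ) := by
    rcases htwo with h | h | h | h | h | h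
    · -- a = b
      rw [haA] at h
      rw [← hbpow, ← h]
    · -- a = c
      rw [haA, hc] at h
      have heqA : A * (1 - l) * w = w - 1 := by
        rw [eq_div_iff (ne_of_gt h1l)] at h
        field_simp at h ⊢
        linarith [h]
      have key : A * (w * l) = A * A ^ (n-1:ℕ) := by
        linear_combination hgeomA - heqA - (A - 1) * hpA
      exact mul_left_cancel₀ (ne_of_gt hA0) key
    · -- a = d
      rw [haA, hdD] at h
      rw [← h] at hpD
      rw [hpD, hpA]; ring
    · -- b = c
      set x := b with hx
      have hxpow : x ^ (n-1:ℕ) = w * l := hbpow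
      have hx1 : (1:ℝ) ≤ x := by
        rw [hb]
        calc (1:ℝ) = (1:ℝ) ^ (((n:ℝ)-1)⁻¹) := (Real.one_rpow _).symm
        _ ≤ (w*l) ^ (((n:ℝ)-1)⁻¹) := by
            apply Real.rpow_le_rpow (by norm_num) hwl1
            rw [inv_nonneg]; linarith
      have heqx : x * (1 - l) * w = w - 1 := by
        rw [hc] at h
        rw [eq_div_iff (ne_of_gt h1l)] at h
        field_simp at h ⊢
        linarith [h]
      have hfact : (x - 1) * (pp n x - w) = 0 := by
        have hgeomx : (x - 1) * pp n x = x * x ^ (n-1) - 1 := by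
          rw [pp_geom]; congr 1
          rw [← pow_succ']; congr 1; omega
        linear_combination hgeomx + x * hxpow - heqx
      rcases mul_eq_zero.1 hfact with h0 | h0
      · have hx1' : x = 1 := by linarith [sub_eq_zero.1 h0]
        have hwl : w * l = 1 := by rw [← hxpow, hx1', one_pow]
        have hwn : w = (n:ℝ) := by
          have h2' : w * (n:ℝ)⁻¹ ≤ 1 := by
            nlinarith [mul_le_mul_of_nonneg_left hl hw0.le]
          have h4 := mul_le_mul_of_nonneg_right h2' hn0.le
          rw [one_mul, mul_assoc, inv_mul_cancel₀ hn0.ne', mul_one] at h4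
          linarith
        have : A = 1 := hA_of_wn hwn
        rw [this, one_pow, hwl]
      · have hpx : pp n x = w := by linarith [sub_eq_zero.1 h0]
        have : A = x := by rw [← hgA, glin_eq hn hw hx1 hpx]
        rw [this, hxpow]
    · -- b = d
      have hDb : D ^ (n-1:ℕ) = w * l := by rw [← hdD, ← h]; exact hbpow
      have hppD : pp n D = w := by
        have h2 : l * pp n D = l * w := by
          rw [← hpD, hDb]; ring
        exact mul_left_cancel₀ (ne_of_gt hl0) h2
      have hAD : A = D := by
        have := glin_eq hn hw hD1 hppD
        rw [← hgA, this]
      rw [hAD, hpD, hppD]; ring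
    · -- c = d
      rw [hdD, hc] at h
      have heqD : D * (1 - l) * w = w - 1 := by
        rw [eq_comm, eq_div_iff (ne_of_gt h1l)] at h
        field_simp at h ⊢
        linarith [h]
      have hppD : pp n D = w := by
        linear_combination pp n D * heqD - w * hgeomD - w * D * hpD
      have hAD : A = D := by
        have := glin_eq hn hw hD1 hppD
        rw [← hgA, this]
      rw [hAD, hpD, hppD]; ring
  -- conclude
  have hba : b = A := by
    rw [hb, hC]
    exact pow_rpow_inv hn hA0.le
  have hca : c = A := by
    rw [hc, div_eq_iff (ne_of_gt h1l)]
    have key : (1 - w⁻¹) * w = (A * (1 - l)) * w := by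
      have h1 : (1 - w⁻¹) * w = w - 1 := by field_simp
      rw [h1]
      linear_combination - hgeomA + A * hC + (A - 1) * hpA
    exact mul_right_cancel₀ (ne_of_gt hw0) key
  have hda : d = A := by
    rw [hd]
    apply gsim_eq hn hl hl1 hA1
    rw [← hC, hpA]; ring
  exact ⟨by rw [haA, hba], by rw [hba, hca], by rw [hca, hda]⟩

-- helper: equal floors of N-scaled fractional parts give closeness
lemma fract_close {A B : ℝ} {N : ℕ} (hN : 0 < N)
    (h : ⌊Int.fract A * N⌋ = ⌊Int.fract B * N⌋) :
    |Int.fract A - Int.fract B| ≤ 1 / N := by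
  have hN0 : (0:ℝ) < N := by exact_mod_cast hN
  have h1 := Int.floor_le (Int.fract A * N)
  have h2 := Int.lt_floor_add_one (Int.fract A * N)
  have h3 := Int.floor_le (Int.fract B * N)
  have h4 := Int.lt_floor_add_one (Int.fract B * N)
  rw [h] at h1 h2
  have habs : |Int.fract A * N - Int.fract B * N| ≤ 1 := by
    rw [abs_le]; constructor <;> linarith
  have : |Int.fract A - Int.fract B| * N ≤ 1 := by
    calc |Int.fract A - Int.fract B| * N
        = |Int.fract A - Int.fract B| * |(N:ℝ)| := by rw [abs_of_nonneg hN0.le]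
      _ = |Int.fract A * N - Int.fract B * N| := by rw [← abs_mul]; ring_nf
      _ ≤ 1 := habs
  rw [le_div_iff₀ hN0]
  linarith

lemma pigeon_sim (n : ℕ) (hn : 1 ≤ n) (θ : Fin n → ℝ) (Q : ℕ) (hQ : 1 ≤ Q) :
    ∃ x : Fin (n+1) → ℤ, x 0 ≠ 0 ∧ (|x 0| : ℝ) ≤ (Q:ℝ)^n ∧
      ∀ i : Fin n, |(x 0 : ℝ) * θ i - (x i.succ : ℝ)| ≤ 1 / Q := by
  have hQ0 : (0:ℝ) < Q := by exact_mod_cast hQ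
  set F : ℕ → (Fin n → ℤ) := fun q i => ⌊Int.fract ((q:ℝ) * θ i) * Q⌋ with hF
  have hmaps : ∀ q ∈ Finset.range (Q^n+1),
      F q ∈ Fintype.piFinset (fun _ : Fin n => Finset.Ico (0:ℤ) Q) := by
    intro q _
    rw [Fintype.mem_piFinset]
    intro i
    rw [Finset.mem_Ico]
    constructor
    · exact Int.floor_nonneg.2 (mul_nonneg (Int.fract_nonneg _) hQ0.le)
    · rw [Int.floor_lt]
      push_cast
      calc Int.fract ((q:ℝ) * θ i) * Q < 1 * Q :=
            mul_lt_mul_of_pos_right (Int.fract_lt_one _) hQ0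
        _ = Q := one_mul _
  have hcard : (Fintype.piFinset (fun _ : Fin n => Finset.Ico (0:ℤ) Q)).card
      < (Finset.range (Q^n+1)).card := by
    rw [Fintype.card_piFinset_const, Finset.card_range, Int.card_Ico]
    simp
  obtain ⟨q1, hq1, q2, hq2, hne, heq⟩ :=
    Finset.exists_ne_map_eq_of_card_lt_of_maps_to hcard hmaps
  refine ⟨Fin.cons ((q1:ℤ) - (q2:ℤ)) (fun i => ⌊(q1:ℝ) * θ i⌋ - ⌊(q2:ℝ) * θ i⌋), ?_, ?_, ?_⟩
  · rw [Fin.cons_zero]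
    exact sub_ne_zero.2 (by exact_mod_cast hne)
  · rw [Fin.cons_zero]
    have h1 : q1 ≤ Q^n := by have := Finset.mem_range.1 hq1; omega
    have h2 : q2 ≤ Q^n := by have := Finset.mem_range.1 hq2; omega
    have h1' : (q1:ℝ) ≤ (Q:ℝ)^n := by exact_mod_cast h1
    have h2' : (q2:ℝ) ≤ (Q:ℝ)^n := by exact_mod_cast h2
    have hq10 : (0:ℝ) ≤ q1 := Nat.cast_nonneg _
    have hq20 : (0:ℝ) ≤ q2 := Nat.cast_nonneg _
    push_cast
    rw [abs_le]
    constructor <;> linarith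
  · intro i
    rw [Fin.cons_succ, Fin.cons_zero]
    have heqi : ⌊Int.fract ((q1:ℝ) * θ i) * Q⌋ = ⌊Int.fract ((q2:ℝ) * θ i) * Q⌋ :=
      congrFun heq i
    have hclose := fract_close (by omega : 0 < Q) heqi
    have hfr1 : Int.fract ((q1:ℝ) * θ i) = (q1:ℝ) * θ i - ⌊(q1:ℝ) * θ i⌋ := rfl
    have hfr2 : Int.fract ((q2:ℝ) * θ i) = (q2:ℝ) * θ i - ⌊(q2:ℝ) * θ i⌋ := rfl
    rw [hfr1, hfr2] at hclose
    push_cast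
    calc |((q1:ℝ) - q2) * θ i - ((⌊(q1:ℝ) * θ i⌋ : ℝ) - ⌊(q2:ℝ) * θ i⌋)|
        = |((q1:ℝ) * θ i - ⌊(q1:ℝ) * θ i⌋) - ((q2:ℝ) * θ i - ⌊(q2:ℝ) * θ i⌋)| := by
          ring_nf
      _ ≤ 1 / Q := hclose

lemma pigeon_lin (n : ℕ) (hn : 1 ≤ n) (θ : Fin n → ℝ) (Q : ℕ) (hQ : 1 ≤ Q) :
    ∃ x : Fin (n+1) → ℤ, (∃ i : Fin n, x i.succ ≠ 0) ∧
      (∀ i : Fin n, (|x i.succ| : ℝ) ≤ (Q:ℝ)) ∧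
      |(x 0 : ℝ) + ∑ i : Fin n, θ i * (x i.succ : ℝ)| ≤ 1 / (Q:ℝ)^n := by
  have hQ0 : (0:ℝ) < Q := by exact_mod_cast hQ
  have hQn : 0 < Q^n := Nat.pow_pos (by omega)
  have hQn0 : (0:ℝ) < (Q:ℝ)^n := by positivity
  set S : (Fin n → ℤ) → ℝ := fun v => ∑ i : Fin n, θ i * (v i : ℝ) with hS
  set G : (Fin n → ℤ) → ℤ := fun v => ⌊Int.fract (S v) * (Q^n : ℕ)⌋ with hG
  have hmaps : ∀ v ∈ Fintype.piFinset (fun _ : Fin n => Finset.Icc (0:ℤ) Q),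
      G v ∈ Finset.Ico (0:ℤ) ((Q:ℤ)^n) := by
    intro v _
    rw [Finset.mem_Ico]
    constructor
    · exact Int.floor_nonneg.2 (mul_nonneg (Int.fract_nonneg _) (by positivity))
    · rw [Int.floor_lt]
      push_cast
      calc Int.fract (S v) * (Q:ℝ)^n < 1 * (Q:ℝ)^n :=
            mul_lt_mul_of_pos_right (Int.fract_lt_one _) hQn0
        _ = (Q:ℝ)^n := one_mul _
  have hcard : (Finset.Ico (0:ℤ) ((Q:ℤ)^n)).card
      < (Fintype.piFinset (fun _ : Fin n => Finset.Icc (0:ℤ) Q)).card := by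
    rw [Fintype.card_piFinset_const, Int.card_Ico, Int.card_Icc]
    have e1 : ((Q:ℤ)^n - 0).toNat = Q^n := by
      rw [sub_zero, ← Nat.cast_pow, Int.toNat_natCast]
    have e2 : ((Q:ℤ) + 1 - 0).toNat = Q + 1 := by
      rw [sub_zero, ← Nat.cast_one, ← Nat.cast_add, Int.toNat_natCast]
    rw [e1, e2]
    exact Nat.pow_lt_pow_left (by omega) (by omega)
  obtain ⟨v1, hv1, v2, hv2, hne, heq⟩ :=
    Finset.exists_ne_map_eq_of_card_lt_of_maps_to hcard hmaps
  refine ⟨Fin.cons (⌊S v2⌋ - ⌊S v1⌋) (fun i => v1 i - v2 i), ?_, ?_, ?_⟩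
  · obtain ⟨i, hi⟩ := Function.ne_iff.1 hne
    exact ⟨i, by rw [Fin.cons_succ]; exact sub_ne_zero.2 hi⟩
  · intro i
    rw [Fin.cons_succ]
    have h1 := Finset.mem_Icc.1 (Fintype.mem_piFinset.1 hv1 i)
    have h2 := Finset.mem_Icc.1 (Fintype.mem_piFinset.1 hv2 i)
    have : |v1 i - v2 i| ≤ (Q:ℤ) := by
      rw [abs_le]; omega
    exact_mod_cast this
  · rw [Fin.cons_zero]
    have hsum : ∑ i : Fin n, θ i * ((Fin.cons (⌊S v2⌋ - ⌊S v1⌋)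
        (fun i => v1 i - v2 i) : Fin (n+1) → ℤ) i.succ : ℝ) = S v1 - S v2 := by
      rw [hS]
      rw [← Finset.sum_sub_distrib]
      apply Finset.sum_congr rfl
      intro i _
      rw [Fin.cons_succ]
      push_cast
      ring
    have heqf : ⌊Int.fract (S v1) * ((Q^n : ℕ):ℝ)⌋ = ⌊Int.fract (S v2) * ((Q^n : ℕ):ℝ)⌋ := heq
    have hclose := fract_close hQn heqf
    rw [hsum]
    have hfr1 : Int.fract (S v1) = S v1 - ⌊S v1⌋ := rfl
    have hfr2 : Int.fract (S v2) = S v2 - ⌊S v2⌋ := rfl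
    rw [hfr1, hfr2] at hclose
    have hcast : 1/((Q^n : ℕ):ℝ) = 1/(Q:ℝ)^n := by push_cast; ring
    rw [hcast] at hclose
    push_cast
    calc |(⌊S v2⌋:ℝ) - ⌊S v1⌋ + (S v1 - S v2)|
        = |(S v1 - ⌊S v1⌋) - (S v2 - ⌊S v2⌋)| := by ring_nf
      _ ≤ 1/(Q:ℝ)^n := hclose

lemma dirichlet_sim (n : ℕ) (hn : 2 ≤ n) (θ : Fin n → ℝ) (γ : ℝ)
    (hγ0 : 0 < γ) (hγ : γ < (n:ℝ)⁻¹) :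
    ∃ T : ℝ, ∀ t : ℝ, T < t → SimSolvable n θ γ t := by
  have hn0 : (0:ℝ) < n := by positivity
  have hnn : ((n:ℝ))⁻¹ ≠ 0 := by positivity
  set e : ℝ := (n:ℝ)⁻¹ - γ with he
  have he0 : 0 < e := by simp [he]; linarith
  refine ⟨max ((2:ℝ)^n) ((2:ℝ) ^ (e⁻¹)), fun t ht => ?_⟩
  have ht1 : (2:ℝ)^n < t := lt_of_le_of_lt (le_max_left _ _) ht
  have ht2 : (2:ℝ) ^ (e⁻¹) < t := lt_of_le_of_lt (le_max_right _ _) ht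
  have h2n0 : (0:ℝ) < 2^n := by positivity
  have ht0 : (0:ℝ) < t := lt_trans h2n0 ht1
  set u : ℝ := t ^ ((n:ℝ)⁻¹) with hu
  have hu0 : 0 < u := Real.rpow_pos_of_pos ht0 _
  have hu2 : (2:ℝ) ≤ u := by
    have h1 : ((2:ℝ)^n) ^ ((n:ℝ)⁻¹) ≤ u := by
      apply Real.rpow_le_rpow h2n0.le ht1.le (by positivity)
    calc (2:ℝ) = ((2:ℝ)^n) ^ ((n:ℝ)⁻¹) := by
          rw [← Real.rpow_natCast (2:ℝ) n, ← Real.rpow_mul (by norm_num),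
            mul_inv_cancel₀ hn0.ne', Real.rpow_one]
      _ ≤ u := h1
  set Q : ℕ := ⌊u⌋₊ with hQ
  have hQ1 : 1 ≤ Q := by
    rw [hQ]
    exact Nat.le_floor (by push_cast; linarith)
  have hQu : (Q:ℝ) ≤ u := Nat.floor_le hu0.le
  have hQhalf : u / 2 ≤ (Q:ℝ) := by
    have := Nat.lt_floor_add_one u
    linarith
  have htgam : t ^ γ ≤ (Q:ℝ) := by
    have hte : (2:ℝ) ≤ t ^ e := by
      calc (2:ℝ) = ((2:ℝ) ^ (e⁻¹)) ^ e := by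
            rw [← Real.rpow_mul (by norm_num), inv_mul_cancel₀ he0.ne', Real.rpow_one]
        _ ≤ t ^ e := Real.rpow_le_rpow (by positivity) ht2.le he0.le
    have hsplit : u = t ^ γ * t ^ e := by
      rw [hu, he, ← Real.rpow_add ht0]
      ring_nf
    have htg0 : 0 < t ^ γ := Real.rpow_pos_of_pos ht0 _
    have : t ^ γ * 2 ≤ u := by
      rw [hsplit]
      exact mul_le_mul_of_nonneg_left hte htg0.le
    linarith
  obtain ⟨x, hx0, hxb, hxe⟩ := pigeon_sim n (by omega) θ Q hQ1
  refine ⟨x, hx0, ?_, ?_⟩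
  · calc (|x 0| : ℝ) ≤ (Q:ℝ)^n := hxb
    _ ≤ u^n := pow_le_pow_left₀ (by positivity) hQu n
    _ = t := by
        rw [hu, ← Real.rpow_natCast (t ^ ((n:ℝ)⁻¹)) n, ← Real.rpow_mul ht0.le,
          inv_mul_cancel₀ hn0.ne', Real.rpow_one]
  · intro i
    calc |(x 0 : ℝ) * θ i - (x i.succ : ℝ)| ≤ 1 / Q := hxe i
    _ ≤ t ^ (-γ) := by
        rw [Real.rpow_neg ht0.le, ← one_div]
        apply one_div_le_one_div_of_le (Real.rpow_pos_of_pos ht0 _) htgam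

lemma dirichlet_lin (n : ℕ) (hn : 2 ≤ n) (θ : Fin n → ℝ) (γ : ℝ)
    (hγ0 : 0 < γ) (hγ : γ < (n:ℝ)) :
    ∃ T : ℝ, ∀ t : ℝ, T < t → LinSolvable n θ γ t := by
  have hn0 : (0:ℝ) < n := by positivity
  set e : ℝ := (n:ℝ) - γ with he
  have he0 : 0 < e := by simp [he]; linarith
  refine ⟨max 2 ((2:ℝ) ^ ((n:ℝ) * e⁻¹)), fun t ht => ?_⟩
  have ht1 : (2:ℝ) < t := lt_of_le_of_lt (le_max_left _ _) ht
  have ht2 : (2:ℝ) ^ ((n:ℝ) * e⁻¹) < t := lt_of_le_of_lt (le_max_right _ _) ht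
  have ht0 : (0:ℝ) < t := by linarith
  set Q : ℕ := ⌊t⌋₊ with hQ
  have hQ1 : 1 ≤ Q := Nat.le_floor (by push_cast; linarith)
  have hQt : (Q:ℝ) ≤ t := Nat.floor_le ht0.le
  have hQhalf : t / 2 ≤ (Q:ℝ) := by
    have := Nat.lt_floor_add_one t
    linarith
  have hQ0 : (0:ℝ) < Q := by
    have : (1:ℝ) ≤ Q := by exact_mod_cast hQ1
    linarith
  have htgam : t ^ γ ≤ (Q:ℝ)^n := by
    have hte : (2:ℝ) ^ ((n:ℝ)) ≤ t ^ e := by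
      calc (2:ℝ) ^ ((n:ℝ)) = ((2:ℝ) ^ ((n:ℝ) * e⁻¹)) ^ e := by
            rw [← Real.rpow_mul (by norm_num), mul_assoc, inv_mul_cancel₀ he0.ne',
              mul_one]
        _ ≤ t ^ e := Real.rpow_le_rpow (by positivity) ht2.le he0.le
    have htg0 : 0 < t ^ γ := Real.rpow_pos_of_pos ht0 _
    have hsplit : t ^ ((n:ℝ)) = t ^ γ * t ^ e := by
      rw [he, ← Real.rpow_add ht0]
      ring_nf
    have h2 : t ^ γ * (2:ℝ)^((n:ℝ)) ≤ t ^ ((n:ℝ)) := by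
      rw [hsplit]
      exact mul_le_mul_of_nonneg_left hte htg0.le
    have hdiv : t ^ γ ≤ t ^ ((n:ℝ)) / (2:ℝ)^((n:ℝ)) := by
      rw [le_div_iff₀ (by positivity : (0:ℝ) < (2:ℝ)^((n:ℝ)))]
      exact h2
    have hhalfpow : t ^ ((n:ℝ)) / (2:ℝ)^((n:ℝ)) = (t/2)^((n:ℝ)) :=
      (Real.div_rpow ht0.le (by norm_num) _).symm
    have hfin : (t/2)^((n:ℝ)) ≤ (Q:ℝ)^n := by
      calc (t/2)^((n:ℝ)) ≤ (Q:ℝ)^((n:ℝ)) :=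
            Real.rpow_le_rpow (by linarith) hQhalf (by positivity)
        _ = (Q:ℝ)^n := Real.rpow_natCast _ n
    calc t ^ γ ≤ t ^ ((n:ℝ)) / (2:ℝ)^((n:ℝ)) := hdiv
      _ = (t/2)^((n:ℝ)) := hhalfpow
      _ ≤ (Q:ℝ)^n := hfin
  obtain ⟨x, hx0, hxb, hxe⟩ := pigeon_lin n (by omega) θ Q hQ1
  refine ⟨x, hx0, fun i => le_trans (hxb i) hQt, ?_⟩
  calc |(x 0 : ℝ) + ∑ i : Fin n, θ i * (x i.succ : ℝ)| ≤ 1 / (Q:ℝ)^n := hxe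
  _ ≤ t ^ (-γ) := by
      rw [Real.rpow_neg ht0.le, ← one_div]
      apply one_div_le_one_div_of_le (Real.rpow_pos_of_pos ht0 _) htgam


lemma omega_ge (n : ℕ) (hn : 2 ≤ n) (θ : Fin n → ℝ)
    (hfin : omegaHatExp n θ ≠ ⊤) : (n:ℝ) ≤ (omegaHatExp n θ).toReal := by
  by_contra hcon
  push_neg at hcon
  have h0 : 0 ≤ (omegaHatExp n θ).toReal := ENNReal.toReal_nonneg
  obtain ⟨γ, hγ1, hγ2⟩ := exists_between hcon
  have hγ0 : 0 < γ := lt_of_le_of_lt h0 hγ1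
  obtain ⟨T, hT⟩ := dirichlet_lin n hn θ γ hγ0 hγ2
  have hle : ENNReal.ofReal γ ≤ omegaHatExp n θ :=
    le_sSup ⟨γ, hγ0, rfl, T, hT⟩
  rw [ENNReal.ofReal_le_iff_le_toReal hfin] at hle
  linarith

lemma lambda_ge (n : ℕ) (hn : 2 ≤ n) (θ : Fin n → ℝ)
    (hfin : lambdaHatExp n θ ≠ ⊤) : (n:ℝ)⁻¹ ≤ (lambdaHatExp n θ).toReal := by
  by_contra hcon
  push_neg at hcon
  have h0 : 0 ≤ (lambdaHatExp n θ).toReal := ENNReal.toReal_nonneg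
  obtain ⟨γ, hγ1, hγ2⟩ := exists_between hcon
  have hγ0 : 0 < γ := lt_of_le_of_lt h0 hγ1
  obtain ⟨T, hT⟩ := dirichlet_sim n hn θ γ hγ0 hγ2
  have hle : ENNReal.ofReal γ ≤ lambdaHatExp n θ :=
    le_sSup ⟨γ, hγ0, rfl, T, hT⟩
  rw [ENNReal.ofReal_le_iff_le_toReal hfin] at hle
  linarith

/-- if `1, θ₁, …, θₙ` are linearly independent over `ℚ`, `ω̂ < ∞` and `λ̂ < 1`,
and any two of the four quantities `G_lin(ω̂)`, `(ω̂λ̂)^{1/(n-1)}`, `(1-ω̂⁻¹)/(1-λ̂)`,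
`G_sim(λ̂)` are equal, then all four of them are equal. -/
theorem stmt9 (n : ℕ) (hn : 2 ≤ n) (θ : Fin n → ℝ)
    (hindep : LinearIndependent ℚ (Fin.cons 1 θ : Fin (n+1) → ℝ))
    (homhat : omegaHatExp n θ < ⊤) (hlamhat : lambdaHatExp n θ < 1)
    (a b c d : ℝ)
    (ha : a = Glin n (omegaHatExp n θ).toReal)
    (hb : b = ((omegaHatExp n θ).toReal * (lambdaHatExp n θ).toReal) ^ (((n : ℝ) - 1)⁻¹))
    (hc : c = (1 - ((omegaHatExp n θ).toReal)⁻¹) / (1 - (lambdaHatExp n θ).toReal))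
    (hd : d = Gsim n (lambdaHatExp n θ).toReal)
    (htwo : a = b ∨ a = c ∨ a = d ∨ b = c ∨ b = d ∨ c = d) :
    a = b ∧ b = c ∧ c = d := by
  set w : ℝ := (omegaHatExp n θ).toReal with hwdef
  set l : ℝ := (lambdaHatExp n θ).toReal with hldef
  have hw : (n:ℝ) ≤ w := omega_ge n hn θ homhat.ne
  have hlamne : lambdaHatExp n θ ≠ ⊤ := (lt_of_lt_of_le hlamhat le_top).ne
  have hl : (n:ℝ)⁻¹ ≤ l := lambda_ge n hn θ hlamne
  have hl1 : l < 1 := by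
    have := (ENNReal.toReal_lt_toReal hlamne ENNReal.one_ne_top).2 hlamhat
    simpa using this
  exact main_alg hn hw hl hl1 a b c d ha hb hc hd htwo
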